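/- Let 𝒢=(G,w) be a positive-weighted graph with V(G)={1,...,n} and let i,j be distinct vertices. Then the 2-weight D_{i,j}(𝒢) is indecomposable (i.e. D_{i,j}(𝒢) < D_{i,z}(𝒢)+D_{z,j}(𝒢) for every z ∈ {1,...,n}∖{i,j}) if and only if G contains the edge e(i,j) and e(i,j) is useful. In this case, D_{i,j}(𝒢) is realized only by the path consisting of the single edge e(i,j), and in particular D_{i,j}(𝒢)=w(e(i,j)). -/

import Mathlib

open SimpleGraph

variable {V : Type*}

/-- weight of a walk: sum of the weights of its edges -/
noncomputable def walkWeight (G : SimpleGraph V) (w : Sym2 V → ℝ) {i j : V} (p : G.Walk i j) : ℝ :=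
  (p.edges.map w).sum

/-- the 2-weight: min over paths joining i and j -/
noncomputable def wdist (G : SimpleGraph V) (w : Sym2 V → ℝ) (i j : V) : ℝ :=
  sInf {x : ℝ | ∃ p : G.Walk i j, p.IsPath ∧ walkWeight G w p = x}

def Realizes (G : SimpleGraph V) (w : Sym2 V → ℝ) {i j : V} (p : G.Walk i j) : Prop :=
  p.IsPath ∧ walkWeight G w p = wdist G w i j

def UsefulEdge (G : SimpleGraph V) (w : Sym2 V → ℝ) (e : Sym2 V) : Prop :=
  ∃ a b : V, a ≠ b ∧ ∀ p : G.Walk a b, Realizes G w p → e ∈ p.edges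

def Pruned (G : SimpleGraph V) (w : Sym2 V → ℝ) : Prop :=
  ∀ e ∈ G.edgeSet, UsefulEdge G w e

def PosWeights (G : SimpleGraph V) (w : Sym2 V → ℝ) : Prop :=
  ∀ e ∈ G.edgeSet, 0 < w e

def Indec (G : SimpleGraph V) (w : Sym2 V → ℝ) (i j : V) : Prop :=
  ∀ z : V, z ≠ i → z ≠ j → wdist G w i j < wdist G w i z + wdist G w z j

def IsLeaf (G : SimpleGraph V) (v : V) : Prop := (G.neighborSet v).ncard = 1

def IsSnake (G : SimpleGraph V) : Prop :=
  G.IsTree ∧ {v : V | IsLeaf G v}.ncard = 2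

def IsCaterpillar (G : SimpleGraph V) : Prop :=
  G.IsTree ∧ ∃ (x₁ x₂ : V) (p : G.Walk x₁ x₂), p.IsPath ∧
    {v : V | v ∈ p.support} = {v : V | 2 ≤ (G.neighborSet v).ncard}

def IsPolygon {n : ℕ} [NeZero n] (G : SimpleGraph (Fin n)) : Prop :=
  ∃ σ : Equiv.Perm (Fin n), G.edgeSet = Set.range (fun i : Fin n => s(σ i, σ (i + 1)))

noncomputable def tmin (G : SimpleGraph V) (w : Sym2 V → ℝ) (x : V) : ℝ :=
  (1 / 2) * sInf {r : ℝ | ∃ y z : V, y ≠ x ∧ z ≠ x ∧ y ≠ z ∧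
    r = wdist G w x y + wdist G w x z - wdist G w y z}

def IsBipartiteOn (G : SimpleGraph V) (X Y : Set V) : Prop :=
  X ∩ Y = ∅ ∧ X ∪ Y = Set.univ ∧ ∀ a b : V, G.Adj a b → (a ∈ X ∧ b ∈ Y) ∨ (a ∈ Y ∧ b ∈ X)

noncomputable def chainSum {α : Type*} (D : α → α → ℝ) : List α → ℝ
  | [] => 0
  | [_] => 0
  | a :: b :: l => D a b + chainSum D (b :: l)

def FIndec {n : ℕ} (D : Fin n → Fin n → ℝ) (i j : Fin n) : Prop :=
  ∀ z : Fin n, z ≠ i → z ≠ j → D i j < D i z + D z j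

def TriangleIneq {n : ℕ} (D : Fin n → Fin n → ℝ) : Prop :=
  ∀ i j k : Fin n, i ≠ j → j ≠ k → i ≠ k → D i j ≤ D i k + D k j

def MaxTwice (x y z : ℝ) : Prop :=
  (x = y ∧ z ≤ x) ∨ (x = z ∧ y ≤ x) ∨ (y = z ∧ x ≤ y)

def FourPoint {n : ℕ} (D : Fin n → Fin n → ℝ) : Prop :=
  ∀ i j k h : Fin n, i ≠ j → i ≠ k → i ≠ h → j ≠ k → j ≠ h → k ≠ h →
    MaxTwice (D i j + D k h) (D i k + D j h) (D i h + D k j)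

def MedianFamily {n : ℕ} (D : Fin n → Fin n → ℝ) : Prop :=
  ∀ a b c : Fin n, ∃! m : Fin n,
    ∀ i ∈ ({a, b, c} : Set (Fin n)), ∀ j ∈ ({a, b, c} : Set (Fin n)), i ≠ j →
      D i j = D i m + D j m

noncomputable def tminF {n : ℕ} (D : Fin n → Fin n → ℝ) (x : Fin n) : ℝ :=
  (1 / 2) * sInf {r : ℝ | ∃ y z : Fin n, y ≠ x ∧ z ≠ x ∧ y ≠ z ∧ r = D x y + D x z - D y z}

def interiorSet {G : SimpleGraph V} {u v : V} (p : G.Walk u v) : Set V :=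
  {x : V | x ∈ p.support ∧ x ≠ u ∧ x ≠ v}


section Aux

variable [DecidableEq V] {G : SimpleGraph V} {w : Sym2 V → ℝ}

lemma walkWeight_append {a b c : V} (p : G.Walk a b) (q : G.Walk b c) :
    walkWeight G w (p.append q) = walkWeight G w p + walkWeight G w q := by
  simp [walkWeight, Walk.edges_append]

lemma walkWeight_cons {a b c : V} (h : G.Adj a b) (p : G.Walk b c) :
    walkWeight G w (Walk.cons h p) = w s(a, b) + walkWeight G w p := by
  simp [walkWeight]

lemma walkWeight_reverse {a b : V} (p : G.Walk a b) :
    walkWeight G w p.reverse = walkWeight G w p := by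
  simp [walkWeight, Walk.edges_reverse, List.sum_reverse]

lemma walkWeight_nonneg (hw : PosWeights G w) {a b : V} (p : G.Walk a b) :
    0 ≤ walkWeight G w p := by
  apply List.sum_nonneg
  intro x hx
  obtain ⟨e, he, rfl⟩ := List.mem_map.1 hx
  exact (hw e (p.edges_subset_edgeSet he)).le

lemma walkWeight_pos (hw : PosWeights G w) {a b : V} (hab : a ≠ b) (p : G.Walk a b) :
    0 < walkWeight G w p := by
  cases p with
  | nil => exact absurd rfl hab
  | cons h q =>
    rw [walkWeight_cons]
    have h1 := hw _ (G.mem_edgeSet.mpr h)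
    have h2 := walkWeight_nonneg hw q
    linarith

lemma walkWeight_dropUntil_le (hw : PosWeights G w) {a b : V} (p : G.Walk a b) (u : V)
    (h : u ∈ p.support) :
    walkWeight G w (p.dropUntil u h) ≤ walkWeight G w p := by
  conv_rhs => rw [← p.take_spec h]
  rw [walkWeight_append]
  have := walkWeight_nonneg hw (p.takeUntil u h)
  linarith

lemma walkWeight_bypass_le (hw : PosWeights G w) {a b : V} (p : G.Walk a b) :
    walkWeight G w p.bypass ≤ walkWeight G w p := by
  induction p with
  | nil => simp [Walk.bypass]
  | cons h q ih =>
    simp only [Walk.bypass]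
    split_ifs with hs
    · have h1 := walkWeight_dropUntil_le hw q.bypass _ hs
      have h2 := hw _ (G.mem_edgeSet.mpr h)
      rw [walkWeight_cons]
      linarith
    · rw [walkWeight_cons, walkWeight_cons]
      linarith

lemma wdist_le_path (hw : PosWeights G w) {i j : V} (p : G.Walk i j) (hp : p.IsPath) :
    wdist G w i j ≤ walkWeight G w p := by
  apply csInf_le
  · exact ⟨0, by rintro x ⟨q, hq, rfl⟩; exact walkWeight_nonneg hw q⟩
  · exact ⟨p, hp, rfl⟩

lemma wdist_le_walk (hw : PosWeights G w) {i j : V} (p : G.Walk i j) :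
    wdist G w i j ≤ walkWeight G w p :=
  (wdist_le_path hw p.bypass p.bypass_isPath).trans (walkWeight_bypass_le hw p)

lemma exists_realizes [Fintype V] [DecidableEq V] (hconn : G.Connected)
    (i j : V) : ∃ p : G.Walk i j, Realizes G w p := by
  classical
  have hne : {x : ℝ | ∃ p : G.Walk i j, p.IsPath ∧ walkWeight G w p = x}.Nonempty := by
    obtain ⟨q⟩ := hconn.preconnected i j
    exact ⟨_, ⟨q.bypass, q.bypass_isPath, rfl⟩⟩
  have hfin : {x : ℝ | ∃ p : G.Walk i j, p.IsPath ∧ walkWeight G w p = x}.Finite := by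
    have heq : {x : ℝ | ∃ p : G.Walk i j, p.IsPath ∧ walkWeight G w p = x}
        = Set.range (fun q : G.Path i j => walkWeight G w q.1) := by
      ext x
      constructor
      · rintro ⟨p, hp, rfl⟩; exact ⟨⟨p, hp⟩, rfl⟩
      · rintro ⟨⟨p, hp⟩, rfl⟩; exact ⟨p, hp, rfl⟩
    rw [heq]
    exact Set.finite_range _
  obtain ⟨p, hp, he⟩ := hne.csInf_mem hfin
  exact ⟨p, hp, he⟩

lemma wdist_nonneg [Fintype V] [DecidableEq V] (hconn : G.Connected) (hw : PosWeights G w)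
    (i j : V) : 0 ≤ wdist G w i j := by
  obtain ⟨p, hp, he⟩ := exists_realizes (w := w) hconn i j
  rw [← he]
  exact walkWeight_nonneg hw p

lemma wdist_pos [Fintype V] [DecidableEq V] (hconn : G.Connected) (hw : PosWeights G w)
    {i j : V} (hij : i ≠ j) : 0 < wdist G w i j := by
  obtain ⟨p, hp, he⟩ := exists_realizes (w := w) hconn i j
  rw [← he]
  exact walkWeight_pos hw hij p

lemma walk_decomp {a b : V} (p : G.Walk a b) {e : Sym2 V} (he : e ∈ p.edges) :
    ∃ (c d : V) (_ : G.Adj c d) (p₁ : G.Walk a c) (p₂ : G.Walk d b),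
      s(c, d) = e ∧ p.edges = p₁.edges ++ e :: p₂.edges := by
  induction p with
  | nil => simp at he
  | cons h q ih =>
    rw [Walk.edges_cons, List.mem_cons] at he
    rcases he with he | he
    · exact ⟨_, _, h, Walk.nil, q, he.symm, by simp [he]⟩
    · obtain ⟨c, d, hcd, p₁, p₂, hs, hedges⟩ := ih he
      exact ⟨c, d, hcd, Walk.cons h p₁, p₂, hs, by simp [hedges]⟩

lemma wdist_bound_of_edge_mem (hw : PosWeights G w) {x y i j : V} (q : G.Walk x y)
    (he : s(i, j) ∈ q.edges) :
    w s(i, j) + wdist G w j y ≤ walkWeight G w q ∨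
      w s(i, j) + wdist G w i y ≤ walkWeight G w q := by
  obtain ⟨c, d, hcd, p₁, p₂, hs, hed⟩ := walk_decomp q he
  have hq : walkWeight G w q = walkWeight G w p₁ + w s(i, j) + walkWeight G w p₂ := by
    simp [walkWeight, hed]
    ring
  have h0 := walkWeight_nonneg hw p₁
  rcases Sym2.eq_iff.1 hs with ⟨hc, hd⟩ | ⟨hc, hd⟩
  · left
    subst hd
    have h1 := wdist_le_walk hw p₂
    linarith
  · right
    subst hd
    have h1 := wdist_le_walk hw p₂
    linarith

end Aux

/-- `D i j` is indecomposable iff `e(i,j)` is an edge of `G` and it is useful; in this case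
`D i j` is realized only by the path consisting of the single edge `e(i,j)`, and
`D i j = w (e(i,j))`. -/
theorem stmt_1 {n : ℕ} (G : SimpleGraph (Fin n)) (hconn : G.Connected)
    (w : Sym2 (Fin n) → ℝ) (hw : PosWeights G w) (i j : Fin n) (hij : i ≠ j) :
    (Indec G w i j ↔ s(i, j) ∈ G.edgeSet ∧ UsefulEdge G w s(i, j)) ∧
    (Indec G w i j →
      (∀ q : G.Walk i j, Realizes G w q → q.edges = [s(i, j)]) ∧
        wdist G w i j = w s(i, j)) := by
  classical
  have key : Indec G w i j → ∀ q : G.Walk i j, Realizes G w q → q.edges = [s(i, j)] := by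
    intro hind q hq
    cases q with
    | nil => exact absurd rfl hij
    | @cons _ x _ h q' =>
      by_cases hx : x = j
      · subst hx
        have hq' : q' = Walk.nil := Walk.isPath_iff_eq_nil.1 hq.1.of_cons
        subst hq'
        simp
      · exfalso
        have hxi : x ≠ i := fun hh => h.ne (hh ▸ rfl)
        have hpath : (Walk.cons h Walk.nil).IsPath :=
          (Walk.cons_isPath_iff _ _).2 ⟨Walk.IsPath.nil, by simp [h.ne]⟩
        have h1 : wdist G w i x ≤ w s(i, x) := by
          have := wdist_le_path hw (Walk.cons h Walk.nil) hpath
          simpa [walkWeight] using this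
        have h2 : wdist G w x j ≤ walkWeight G w q' := wdist_le_path hw q' hq.1.of_cons
        have h3 := hind x hxi hx
        have h4 : walkWeight G w (Walk.cons h q') = wdist G w i j := hq.2
        rw [walkWeight_cons] at h4
        linarith
  have fwd : Indec G w i j → s(i, j) ∈ G.edgeSet ∧ UsefulEdge G w s(i, j) := by
    intro hind
    obtain ⟨p, hp⟩ := exists_realizes (w := w) hconn i j
    have hedges := key hind p hp
    have hmem : s(i, j) ∈ G.edgeSet := p.edges_subset_edgeSet (by rw [hedges]; simp)
    exact ⟨hmem, i, j, hij, fun q hq => by rw [key hind q hq]; simp⟩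
  have bwd : s(i, j) ∈ G.edgeSet ∧ UsefulEdge G w s(i, j) → Indec G w i j := by
    rintro ⟨hmem, a, b, hab, huse⟩
    intro z hzi hzj
    by_contra hcon
    push_neg at hcon
    have hadj : G.Adj i j := G.mem_edgeSet.mp hmem
    have hwe : 0 < w s(i, j) := hw _ hmem
    have hone : wdist G w i j ≤ w s(i, j) := by
      have hpath : (Walk.cons hadj Walk.nil).IsPath :=
        (Walk.cons_isPath_iff _ _).2 ⟨Walk.IsPath.nil, by simp [hij]⟩
      have := wdist_le_path hw (Walk.cons hadj Walk.nil) hpath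
      simpa [walkWeight] using this
    have hle : wdist G w i z + wdist G w z j ≤ w s(i, j) := hcon.trans hone
    obtain ⟨q1, hq1⟩ := exists_realizes (w := w) hconn i z
    obtain ⟨q2, hq2⟩ := exists_realizes (w := w) hconn z j
    have hpos_zj : 0 < wdist G w z j := wdist_pos hconn hw hzj
    have hpos_jz : 0 < wdist G w j z := wdist_pos hconn hw (Ne.symm hzj)
    have hpos_iz : 0 < wdist G w i z := wdist_pos hconn hw (fun hh => hzi hh.symm)
    have hnn_jj : 0 ≤ wdist G w j j := wdist_nonneg hconn hw j j
    have hnn_ij : 0 ≤ wdist G w i j := wdist_nonneg hconn hw i j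
    have he1 : s(i, j) ∉ q1.edges := by
      intro hmem1
      rcases wdist_bound_of_edge_mem hw q1 hmem1 with hb | hb <;> rw [hq1.2] at hb
      · linarith
      · linarith
    have he2 : s(i, j) ∉ q2.edges := by
      intro hmem2
      rcases wdist_bound_of_edge_mem hw q2 hmem2 with hb | hb <;> rw [hq2.2] at hb
      · linarith
      · linarith
    have hwm : walkWeight G w (q1.append q2) = wdist G w i z + wdist G w z j := by
      rw [walkWeight_append, hq1.2, hq2.2]
    have hem : s(i, j) ∉ (q1.append q2).edges := by
      rw [Walk.edges_append, List.mem_append]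
      rintro (hh | hh)
      · exact he1 hh
      · exact he2 hh
    obtain ⟨p, hp⟩ := exists_realizes (w := w) hconn a b
    have hep : s(i, j) ∈ p.edges := huse p hp
    obtain ⟨c, d, hcd, p₁, p₂, hs, hed⟩ := walk_decomp p hep
    have hnodup := hp.1.edges_nodup
    rw [hed] at hnodup
    obtain ⟨hn1, hn2, hdisj⟩ := List.nodup_append.1 hnodup
    have hne1 : s(i, j) ∉ p₁.edges := fun hh => hdisj _ hh _ List.mem_cons_self rfl
    have hne2 : s(i, j) ∉ p₂.edges := (List.nodup_cons.1 hn2).1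
    have final : ∀ m : G.Walk c d, s(i, j) ∉ m.edges →
        walkWeight G w m ≤ w s(i, j) → False := by
      intro m hm hwle
      set r := p₁.append (m.append p₂) with hr
      have hwp : walkWeight G w p = walkWeight G w p₁ + w s(i, j) + walkWeight G w p₂ := by
        simp [walkWeight, hed]
        ring
      have hwr : walkWeight G w r ≤ wdist G w a b := by
        rw [hr, walkWeight_append, walkWeight_append, ← hp.2, hwp]
        linarith
      have hreal : Realizes G w r.bypass :=
        ⟨r.bypass_isPath, le_antisymm ((walkWeight_bypass_le hw r).trans hwr)
          (wdist_le_path hw r.bypass r.bypass_isPath)⟩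
      have hmem' : s(i, j) ∈ r.edges := r.edges_bypass_subset (huse r.bypass hreal)
      rw [hr, Walk.edges_append, Walk.edges_append, List.mem_append, List.mem_append] at hmem'
      rcases hmem' with hh | hh | hh
      · exact hne1 hh
      · exact hm hh
      · exact hne2 hh
    rcases Sym2.eq_iff.1 hs with ⟨hc, hd⟩ | ⟨hc, hd⟩
    · subst hc; subst hd
      exact final (q1.append q2) hem (by rw [hwm]; exact hle)
    · subst hc; subst hd
      refine final (q1.append q2).reverse ?_ ?_
      · rw [Walk.edges_reverse]
        intro hh
        exact hem (List.mem_reverse.1 hh)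
      · rw [walkWeight_reverse, hwm]; exact hle
  refine ⟨⟨fwd, bwd⟩, fun hind => ⟨key hind, ?_⟩⟩
  obtain ⟨p, hp⟩ := exists_realizes (w := w) hconn i j
  have hedges := key hind p hp
  rw [← hp.2, walkWeight, hedges]
  simp
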